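/- arXiv:2311.16000 — 3 statements merged into one kernel-verified Lean document; each statement's English description precedes it below -/
import Mathlib

section
/- Let n ∈ {2,3}. For all real ρ and all real σ > 0, the function iₙ(ρ,σ) = (n/(2σ^(2/n)))·(ρ² + σ²/(1−n)) is a first integral of the degenerate NPR system: its derivative along the flow vanishes, i.e. (∂iₙ/∂ρ)(ρ,σ)·(ρ² + σ²) + (∂iₙ/∂σ)(ρ,σ)·(nρσ) = 0, where σ^(2/n) denotes the real power of the positive number σ. -/
/-- The function `iₙ(ρ,σ) = (n/(2σ^(2/n)))(ρ² + σ²/(1−n))` is a first integral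
of the degenerate NPR system `F₀(ρ,σ) = (ρ² + σ², nρσ)` for `σ > 0`: its
derivative along the flow vanishes. -/
theorem stmt11 (n : ℝ) (hn : n = 2 ∨ n = 3) (ρ σ : ℝ) (hσ : 0 < σ) :
    deriv (fun ρ' : ℝ => n / (2 * σ ^ ((2 : ℝ) / n)) * (ρ' ^ 2 + σ ^ 2 / (1 - n))) ρ *
      (ρ ^ 2 + σ ^ 2) +
    deriv (fun σ' : ℝ => n / (2 * σ' ^ ((2 : ℝ) / n)) * (ρ ^ 2 + σ' ^ 2 / (1 - n))) σ *
      (n * ρ * σ) = 0 := by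
  have hn0 : n ≠ 0 := by rcases hn with h | h <;> simp [h]
  have hn1 : (1 : ℝ) - n ≠ 0 := by rcases hn with h | h <;> norm_num [h]
  set a : ℝ := (2 : ℝ) / n with ha
  have hσ0 : σ ≠ 0 := ne_of_gt hσ
  have ht0 : σ ^ a ≠ 0 := (Real.rpow_pos_of_pos hσ a).ne'
  -- derivative in ρ
  have h1 : HasDerivAt (fun ρ' : ℝ => n / (2 * σ ^ a) * (ρ' ^ 2 + σ ^ 2 / (1 - n)))
      (n / (2 * σ ^ a) * (2 * ρ)) ρ := by
    have : HasDerivAt (fun ρ' : ℝ => ρ' ^ 2 + σ ^ 2 / (1 - n)) (2 * ρ) ρ := by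
      simpa using (hasDerivAt_pow 2 ρ).add_const (σ ^ 2 / (1 - n))
    exact this.const_mul _
  -- derivative in σ
  have hden : HasDerivAt (fun σ' : ℝ => 2 * σ' ^ a) (2 * (a * σ ^ (a - 1))) σ :=
    (Real.hasDerivAt_rpow_const (Or.inl hσ0)).const_mul 2
  have hg : HasDerivAt (fun σ' : ℝ => n / (2 * σ' ^ a))
      ((0 * (2 * σ ^ a) - n * (2 * (a * σ ^ (a - 1)))) / (2 * σ ^ a) ^ 2) σ :=
    (hasDerivAt_const σ n).div hden (by simpa using ht0)
  have hh : HasDerivAt (fun σ' : ℝ => ρ ^ 2 + σ' ^ 2 / (1 - n)) (2 * σ / (1 - n)) σ := by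
    simpa [mul_div_assoc] using ((hasDerivAt_pow 2 σ).div_const (1 - n)).const_add (ρ ^ 2)
  have h2 : HasDerivAt (fun σ' : ℝ => n / (2 * σ' ^ a) * (ρ ^ 2 + σ' ^ 2 / (1 - n))) _ σ := hg.mul hh
  rw [h1.deriv, h2.deriv]
  have hsub : σ ^ (a - 1) = σ ^ a / σ := by
    rw [Real.rpow_sub hσ, Real.rpow_one]
  have hna : n * a = 2 := by rw [ha]; field_simp
  rw [hsub]
  generalize σ ^ a = t at ht0 ⊢
  rw [ha]
  field_simp
  ring
end

section
/- Let n ∈ {2,3}. For all real ρ and all real ω > 0, the function iₙ(ρ,ω) = (n/(2ω^(2/n)))·(ω²/(n−1) + ρ²) is a first integral of the degenerate convergence-vorticity system: (∂iₙ/∂ρ)(ρ,ω)·(ρ² − ω²) + (∂iₙ/∂ω)(ρ,ω)·(nρω) = 0, where ω^(2/n) denotes the real power of the positive number ω. -/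
/-- The function `iₙ(ρ,ω) = (n/(2ω^(2/n)))(ω²/(n−1) + ρ²)` is a first integral
of the degenerate convergence-vorticity system `G₀(ρ,ω) = (ρ² − ω², nρω)` for
`ω > 0`: its derivative along the flow vanishes. -/
theorem stmt12 (n : ℝ) (hn : n = 2 ∨ n = 3) (ρ ω : ℝ) (hω : 0 < ω) :
    deriv (fun ρ' : ℝ => n / (2 * ω ^ ((2 : ℝ) / n)) * (ω ^ 2 / (n - 1) + ρ' ^ 2)) ρ *
      (ρ ^ 2 - ω ^ 2) +
    deriv (fun ω' : ℝ => n / (2 * ω' ^ ((2 : ℝ) / n)) * (ω' ^ 2 / (n - 1) + ρ ^ 2)) ω *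
      (n * ρ * ω) = 0 := by
  have hn0 : n ≠ 0 := by rcases hn with h | h <;> rw [h] <;> norm_num
  have hn1 : n - 1 ≠ 0 := by rcases hn with h | h <;> rw [h] <;> norm_num
  set q : ℝ := (2 : ℝ) / n with hq
  have hE : (0 : ℝ) < ω ^ q := Real.rpow_pos_of_pos hω q
  have hE0 : ω ^ q ≠ 0 := ne_of_gt hE
  -- derivative in ρ
  have h1 : HasDerivAt (fun ρ' : ℝ => n / (2 * ω ^ q) * (ω ^ 2 / (n - 1) + ρ' ^ 2))
      (n / (2 * ω ^ q) * (2 * ρ)) ρ := by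
    have := ((hasDerivAt_pow 2 ρ).const_add (ω ^ 2 / (n - 1))).const_mul (n / (2 * ω ^ q))
    simpa using this
  -- derivative in ω
  have hrpow : HasDerivAt (fun ω' : ℝ => ω' ^ q) (q * ω ^ (q - 1)) ω :=
    Real.hasDerivAt_rpow_const (Or.inl (ne_of_gt hω))
  have hinv : HasDerivAt (fun ω' : ℝ => (ω' ^ q)⁻¹) (-(q * ω ^ (q - 1)) / (ω ^ q) ^ 2) ω :=
    hrpow.inv hE0
  have hpoly : HasDerivAt (fun ω' : ℝ => ω' ^ 2 / (n - 1) + ρ ^ 2)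
      (2 * ω / (n - 1)) ω := by
    have := ((hasDerivAt_pow 2 ω).div_const (n - 1)).add_const (ρ ^ 2)
    simpa using this
  have h2 : HasDerivAt (fun ω' : ℝ => n / (2 * ω' ^ q) * (ω' ^ 2 / (n - 1) + ρ ^ 2))
      ((n / 2 * (-(q * ω ^ (q - 1)) / (ω ^ q) ^ 2)) * (ω ^ 2 / (n - 1) + ρ ^ 2)
        + (n / 2 * (ω ^ q)⁻¹) * (2 * ω / (n - 1))) ω := by
    have := ((hinv.const_mul (n / 2)).mul hpoly)
    convert this using 2 with ω'
    · rfl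
    · rfl
    · simp only [Pi.mul_apply]; ring
  rw [h1.deriv, h2.deriv]
  have hq1 : ω ^ (q - 1) = ω ^ q / ω := by
    rw [Real.rpow_sub hω, Real.rpow_one]
  rw [hq1, hq]
  have hω0 : ω ≠ 0 := ne_of_gt hω
  field_simp
  ring
end

section
/- Let J₀ = [[0,1],[0,0]]. There exists a map h : ℝ² → ℝ² whose two components are homogeneous quadratic polynomials in (x,y) (explicitly, h(x,y) = (−(3/8)x², −(3/4)xy)) such that for all (x,y) ∈ ℝ²: Dh(x,y)·(J₀·(x,y)) − J₀·h(x,y) = (0, −(3/4)y²). Hence the quadratic term of the Oppenheimer-Snyder system (ẋ = y, ẏ = −(3/4)y²) is nonresonant and can be completely eliminated by a near-identity change of coordinates, so the Oppenheimer-Snyder normal form has no quadratic terms. -/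
/-- The quadratic term of the Oppenheimer-Snyder system is nonresonant for the
Bogdanov-Takens linear part `J₀ = [[0,1],[0,0]]`: the quadratic map
`h(x,y) = (−(3/8)x², −(3/4)xy)` satisfies the homological equation
`Dh(x,y)·(J₀(x,y)) − J₀·h(x,y) = (0, −(3/4)y²)`, so the quadratic term can be
completely eliminated from the normal form. -/
theorem stmt16 :
    ∃ h : ℝ × ℝ → ℝ × ℝ,
      h = (fun p : ℝ × ℝ => (-(3 / 8) * p.1 ^ 2, -(3 / 4) * p.1 * p.2)) ∧
      ∀ p : ℝ × ℝ,
        fderiv ℝ h p (p.2, 0) - (((h p).2, (0 : ℝ)) : ℝ × ℝ) =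
          ((0 : ℝ), -(3 / 4) * p.2 ^ 2) := by
  refine ⟨_, rfl, fun p => ?_⟩
  have h1 : HasFDerivAt (fun p : ℝ × ℝ => -(3 / 8) * p.1 ^ 2)
      ((-(3 / 4) * p.1) • ContinuousLinearMap.fst ℝ ℝ ℝ) p := by
    have := ((hasFDerivAt_fst (𝕜 := ℝ) (p := p)).mul
      (hasFDerivAt_fst (𝕜 := ℝ) (p := p))).const_mul (-(3/8) : ℝ)
    have e : (fun p : ℝ × ℝ => -(3 / 8) * p.1 ^ 2)
        = fun p : ℝ × ℝ => -(3/8) * (p.1 * p.1) := by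
      funext q; ring
    rw [e]
    refine this.congr_fderiv ?_
    apply ContinuousLinearMap.ext; intro v
    simp; ring
  have h2 : HasFDerivAt (fun p : ℝ × ℝ => -(3 / 4) * p.1 * p.2)
      (((-(3 / 4) * p.2) • ContinuousLinearMap.fst ℝ ℝ ℝ)
        + ((-(3 / 4) * p.1) • ContinuousLinearMap.snd ℝ ℝ ℝ)) p := by
    have := (((hasFDerivAt_fst (𝕜 := ℝ) (p := p)).const_mul (-(3/4) : ℝ)).mul
      (hasFDerivAt_snd (𝕜 := ℝ) (p := p)))
    refine this.congr_fderiv ?_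
    apply ContinuousLinearMap.ext; intro v
    simp; ring
  have hd := (h1.prodMk h2).fderiv
  rw [hd]
  simp only [ContinuousLinearMap.prod_apply, ContinuousLinearMap.add_apply,
    ContinuousLinearMap.smul_apply, ContinuousLinearMap.coe_fst',
    ContinuousLinearMap.coe_snd', Prod.mk_sub_mk]
  simp only [smul_eq_mul]
  rw [Prod.mk.injEq]
  constructor <;> ring
end
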